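/- For (not necessarily Hermitian) complex n×n matrices A, B, the product rule f_{AB} = ½ G(df_A, df_B) + (i/2) Ω(df_A, df_B) holds, where f_A(ψ) = ½⟨ψ|Aψ⟩ is the complex-valued quadratic function associated to A. -/

import Mathlib

open Matrix Complex

noncomputable section

/-- Identify a point of `ℝⁿ × ℝⁿ` (coordinates `(q, p)`) with a vector of `ℂⁿ`
via `z^k = q^k + i p^k`. -/
def toVecC {n : ℕ} (x : (Fin n → ℝ) × (Fin n → ℝ)) : Fin n → ℂ :=
  fun k => ⟨x.1 k, x.2 k⟩

/-- The complex-valued quadratic function `f_A(ψ) = ½⟨ψ|Aψ⟩` associated to an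
arbitrary matrix `A ∈ gl(n,ℂ)`, viewed as a function on `ℝⁿ × ℝⁿ ≅ ℂⁿ`. -/
def quadFunC {n : ℕ} (A : Matrix (Fin n) (Fin n) ℂ)
    (x : (Fin n → ℝ) × (Fin n → ℝ)) : ℂ :=
  (1 / 2 : ℂ) * (star (toVecC x) ⬝ᵥ A.mulVec (toVecC x))

/-- `x ↦ toVecC x j` as a continuous ℝ-linear map. -/
def zCLM (n : ℕ) (j : Fin n) : ((Fin n → ℝ) × (Fin n → ℝ)) →L[ℝ] ℂ :=
  Complex.ofRealCLM.comp ((ContinuousLinearMap.proj j).comp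
      (ContinuousLinearMap.fst ℝ (Fin n → ℝ) (Fin n → ℝ))) +
    Complex.I • Complex.ofRealCLM.comp ((ContinuousLinearMap.proj j).comp
      (ContinuousLinearMap.snd ℝ (Fin n → ℝ) (Fin n → ℝ)))

/-- `x ↦ star (toVecC x j)` as a continuous ℝ-linear map. -/
def zbarCLM (n : ℕ) (j : Fin n) : ((Fin n → ℝ) × (Fin n → ℝ)) →L[ℝ] ℂ :=
  Complex.ofRealCLM.comp ((ContinuousLinearMap.proj j).comp
      (ContinuousLinearMap.fst ℝ (Fin n → ℝ) (Fin n → ℝ))) -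
    Complex.I • Complex.ofRealCLM.comp ((ContinuousLinearMap.proj j).comp
      (ContinuousLinearMap.snd ℝ (Fin n → ℝ) (Fin n → ℝ)))

lemma zCLM_apply {n : ℕ} (j : Fin n) (x : (Fin n → ℝ) × (Fin n → ℝ)) :
    zCLM n j x = toVecC x j := by
  simp [zCLM, toVecC, Complex.ext_iff]

lemma zbarCLM_apply {n : ℕ} (j : Fin n) (x : (Fin n → ℝ) × (Fin n → ℝ)) :
    zbarCLM n j x = star (toVecC x j) := by
  simp [zbarCLM, toVecC, Complex.ext_iff]

lemma hasFDerivAt_quadFunC {n : ℕ} (A : Matrix (Fin n) (Fin n) ℂ)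
    (x : (Fin n → ℝ) × (Fin n → ℝ)) :
    HasFDerivAt (quadFunC A)
      ((1 / 2 : ℂ) • ∑ j : Fin n,
        ((∑ k : Fin n, A j k * toVecC x k) • zbarCLM n j +
          (star (toVecC x j)) • ∑ k : Fin n, A j k • zCLM n k)) x := by
  have h : ∀ y, quadFunC A y =
      (1 / 2 : ℂ) * ∑ j : Fin n, zbarCLM n j y * ∑ k : Fin n, A j k * zCLM n k y := by
    intro y
    simp only [quadFunC, dotProduct, mulVec, zbarCLM_apply, zCLM_apply]
    rfl
  have key : HasFDerivAt
      (fun y => ∑ j : Fin n, zbarCLM n j y * ∑ k : Fin n, A j k * zCLM n k y)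
      (∑ j : Fin n,
        ((∑ k : Fin n, A j k * zCLM n k x) • zbarCLM n j +
          (zbarCLM n j x) • ∑ k : Fin n, A j k • zCLM n k)) x := by
    apply HasFDerivAt.fun_sum
    intro j _
    have h1 : HasFDerivAt (fun y => zbarCLM n j y) (zbarCLM n j) x :=
      (zbarCLM n j).hasFDerivAt
    have h2 : HasFDerivAt (fun y => ∑ k : Fin n, A j k * zCLM n k y)
        (∑ k : Fin n, A j k • zCLM n k) x := by
      apply HasFDerivAt.fun_sum
      intro k _
      exact ((zCLM n k).hasFDerivAt).const_mul (A j k)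
    have := h1.fun_mul h2
    exact this.congr_fderiv (add_comm _ _)
  have h3 := key.const_mul ((1 : ℂ) / 2)
  have heq : (fun y => (1/2 : ℂ) * ∑ j : Fin n, zbarCLM n j y *
      ∑ k : Fin n, A j k * zCLM n k y) = quadFunC A := by
    funext y; rw [h y]
  rw [heq] at h3
  simp only [zbarCLM_apply, zCLM_apply] at h3
  exact h3

lemma toVecC_q {n : ℕ} (k j : Fin n) :
    toVecC ((Pi.single k 1 : Fin n → ℝ), 0) j = if j = k then 1 else 0 := by
  simp only [toVecC, Pi.single_apply, Pi.zero_apply]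
  split <;> simp [Complex.ext_iff]

lemma toVecC_p {n : ℕ} (k j : Fin n) :
    toVecC (0, (Pi.single k 1 : Fin n → ℝ)) j = if j = k then Complex.I else 0 := by
  simp only [toVecC, Pi.single_apply, Pi.zero_apply]
  split <;> simp [Complex.ext_iff]

lemma fderiv_quad_q {n : ℕ} (A : Matrix (Fin n) (Fin n) ℂ)
    (x : (Fin n → ℝ) × (Fin n → ℝ)) (k : Fin n) :
    fderiv ℝ (quadFunC A) x ((Pi.single k 1 : Fin n → ℝ), 0) =
      (1 / 2 : ℂ) * ((∑ j : Fin n, star (toVecC x j) * A j k) +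
        ∑ j : Fin n, A k j * toVecC x j) := by
  rw [(hasFDerivAt_quadFunC A x).fderiv]
  simp only [ContinuousLinearMap.coe_smul', Pi.smul_apply, ContinuousLinearMap.coe_sum',
    Finset.sum_apply, ContinuousLinearMap.add_apply,
    smul_eq_mul, zCLM_apply, zbarCLM_apply, toVecC_q, apply_ite (star : ℂ → ℂ), star_one, star_zero,
    mul_ite, mul_one, mul_zero, Finset.sum_ite_eq', Finset.mem_univ, if_true,
    Finset.sum_add_distrib]
  ring

lemma fderiv_quad_p {n : ℕ} (A : Matrix (Fin n) (Fin n) ℂ)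
    (x : (Fin n → ℝ) × (Fin n → ℝ)) (k : Fin n) :
    fderiv ℝ (quadFunC A) x (0, (Pi.single k 1 : Fin n → ℝ)) =
      (1 / 2 : ℂ) * (Complex.I * (∑ j : Fin n, star (toVecC x j) * A j k) -
        Complex.I * ∑ j : Fin n, A k j * toVecC x j) := by
  rw [(hasFDerivAt_quadFunC A x).fderiv]
  simp only [ContinuousLinearMap.coe_smul', Pi.smul_apply, ContinuousLinearMap.coe_sum',
    Finset.sum_apply, ContinuousLinearMap.add_apply,
    smul_eq_mul, zCLM_apply, zbarCLM_apply, toVecC_p, apply_ite (star : ℂ → ℂ),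
    Complex.star_def, Complex.conj_I, star_zero,
    mul_ite, mul_zero, Finset.sum_ite_eq', Finset.mem_univ, if_true,
    Finset.sum_add_distrib]
  simp only [← mul_assoc, ← Finset.sum_mul]
  ring

/-- For arbitrary complex matrices `A, B`, the associative product is encoded by
`f_{AB} = ½ G(df_A, df_B) + (i/2) Ω(df_A, df_B)`. -/
theorem quadFunC_mul {n : ℕ}
    (A B : Matrix (Fin n) (Fin n) ℂ) (x : (Fin n → ℝ) × (Fin n → ℝ)) :
    quadFunC (A * B) x =
      (1 / 2 : ℂ) * ∑ k : Fin n,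
        (fderiv ℝ (quadFunC A) x (Pi.single k 1, 0) *
           fderiv ℝ (quadFunC B) x (Pi.single k 1, 0) +
         fderiv ℝ (quadFunC A) x (0, Pi.single k 1) *
           fderiv ℝ (quadFunC B) x (0, Pi.single k 1)) +
      (Complex.I / 2) * ∑ k : Fin n,
        (fderiv ℝ (quadFunC A) x (Pi.single k 1, 0) *
           fderiv ℝ (quadFunC B) x (0, Pi.single k 1) -
         fderiv ℝ (quadFunC A) x (0, Pi.single k 1) *
           fderiv ℝ (quadFunC B) x (Pi.single k 1, 0)) := by
  simp only [fderiv_quad_q, fderiv_quad_p]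
  have hL : quadFunC (A * B) x = (1 / 2 : ℂ) * ∑ k : Fin n,
      (∑ j : Fin n, star (toVecC x j) * A j k) * (∑ j : Fin n, B k j * toVecC x j) := by
    simp only [quadFunC, ← Matrix.mulVec_mulVec, Matrix.dotProduct_mulVec]
    congr 1
    simp only [dotProduct, vecMul, mulVec, Finset.sum_mul, Finset.mul_sum, Pi.star_apply,
      mul_assoc]
    rw [Finset.sum_comm]
  rw [hL, Finset.mul_sum, Finset.mul_sum, Finset.mul_sum, ← Finset.sum_add_distrib]
  refine Finset.sum_congr rfl fun k _ => ?_
  set a' := ∑ j : Fin n, star (toVecC x j) * A j k with ha'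
  set a := ∑ j : Fin n, A k j * toVecC x j with ha
  set b' := ∑ j : Fin n, star (toVecC x j) * B j k with hb'
  set b := ∑ j : Fin n, B k j * toVecC x j with hb
  linear_combination (-(1/8 : ℂ) * ((a' - a) * (b' - b)) - (1/4 : ℂ) * (a * b' - a' * b)) *
    Complex.I_sq

end
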